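/- Let a : ℤ → ℝ be even (a(−j) = a(j)) and absolutely summable (Σ_{j∈ℤ} |a(j)| < ∞), and let Λ(q) = Σ_{m∈ℤ} a(m) cos(mq). Then for every q ∈ ℝ and every integer j ≥ 1, Σ_{k=1}^{∞} (a(j−k) − a(j+k)) sin(qk) = Λ(q) sin(qj), the series converging absolutely. (The sine waves are eigenfunctions of the semi-infinite chain with ordinary boundary condition, with eigenvalue equal to the bulk dispersion.) -/

import Mathlib

/-!
Sine waves are eigenfunctions of the semi-infinite chain with ordinary boundary
condition, with eigenvalue equal to the bulk dispersion `Λ(q) = Σ_m a(m) cos(mq)`.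
-/

/-- Let `a : ℤ → ℝ` be even and absolutely summable, and `Λ(q) = Σ_{m∈ℤ} a(m) cos(mq)`.
Then for every `q ∈ ℝ` and every integer `j ≥ 1`,
`Σ_{k=1}^∞ (a(j−k) − a(j+k)) sin(qk) = Λ(q) sin(qj)`, the series converging
absolutely. -/
theorem sine_waves_eigenfunctions (a : ℤ → ℝ) (heven : ∀ j : ℤ, a (-j) = a j)
    (hsum : Summable fun j : ℤ => |a j|) (q : ℝ) (j : ℤ) (hj : 1 ≤ j) :
    (Summable fun k : {n : ℤ // 1 ≤ n} =>
        |(a (j - (k : ℤ)) - a (j + (k : ℤ))) * Real.sin (q * ((k : ℤ) : ℝ))|) ∧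
    ∑' (k : {n : ℤ // 1 ≤ n}),
        (a (j - (k : ℤ)) - a (j + (k : ℤ))) * Real.sin (q * ((k : ℤ) : ℝ))
      = (∑' (m : ℤ), a m * Real.cos ((m : ℝ) * q)) * Real.sin (q * (j : ℝ)) := by
  have hsub : Summable fun k : ℤ => |a (j - k)| :=
    ((Equiv.subLeft j).summable_iff (f := fun m => |a m|)).mpr hsum
  have hadd : Summable fun k : ℤ => |a (j + k)| :=
    ((Equiv.addLeft j).summable_iff (f := fun m => |a m|)).mpr hsum
  -- Part 1: absolute summability
  have habs : Summable fun k : {n : ℤ // 1 ≤ n} =>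
      |(a (j - (k : ℤ)) - a (j + (k : ℤ))) * Real.sin (q * ((k : ℤ) : ℝ))| := by
    have hbound : Summable (fun k : {n : ℤ // 1 ≤ n} =>
        |a (j - (k : ℤ))| + |a (j + (k : ℤ))|) := (hsub.add hadd).subtype _
    refine hbound.of_nonneg_of_le (fun k => abs_nonneg _) (fun k => ?_)
    rw [abs_mul]
    calc |a (j - (k:ℤ)) - a (j + (k:ℤ))| * |Real.sin (q * ((k:ℤ) : ℝ))|
        ≤ |a (j - (k:ℤ)) - a (j + (k:ℤ))| * 1 :=
          mul_le_mul_of_nonneg_left (Real.abs_sin_le_one _) (abs_nonneg _)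
      _ = |a (j - (k:ℤ)) - a (j + (k:ℤ))| := mul_one _
      _ ≤ |a (j - (k:ℤ))| + |a (j + (k:ℤ))| := abs_sub _ _
  refine ⟨habs, ?_⟩
  -- the full ℤ-indexed function
  set F : ℤ → ℝ := fun k => a (j - k) * Real.sin (q * (k : ℝ)) with hFdef
  have hFsum : Summable F := by
    apply Summable.of_norm_bounded (g := fun k => |a (j - k)|) hsub
    intro k
    rw [Real.norm_eq_abs, abs_mul]
    exact mul_le_of_le_one_right (abs_nonneg _) (Real.abs_sin_le_one _)
  -- odd part vanishes
  have hodd : ∑' m : ℤ, a m * Real.sin (q * (m : ℝ)) = 0 := by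
    have h1 : ∑' m : ℤ, a (-m) * Real.sin (q * ((-m : ℤ) : ℝ))
        = ∑' m : ℤ, a m * Real.sin (q * (m : ℝ)) :=
      (Equiv.neg ℤ).tsum_eq (fun m => a m * Real.sin (q * (m : ℝ)))
    have h2 : (fun m : ℤ => a (-m) * Real.sin (q * ((-m : ℤ) : ℝ)))
        = fun m : ℤ => -(a m * Real.sin (q * (m : ℝ))) := by
      funext m
      push_cast
      rw [heven, mul_neg, Real.sin_neg, mul_neg]
    rw [h2, tsum_neg] at h1
    linarith
  have hcos : Summable fun m : ℤ => a m * Real.cos (q * (m : ℝ)) := by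
    apply Summable.of_norm_bounded (g := fun m => |a m|) hsum
    intro m
    rw [Real.norm_eq_abs, abs_mul]
    exact mul_le_of_le_one_right (abs_nonneg _) (Real.abs_cos_le_one _)
  have hsin : Summable fun m : ℤ => a m * Real.sin (q * (m : ℝ)) := by
    apply Summable.of_norm_bounded (g := fun m => |a m|) hsum
    intro m
    rw [Real.norm_eq_abs, abs_mul]
    exact mul_le_of_le_one_right (abs_nonneg _) (Real.abs_sin_le_one _)
  -- compute the full sum
  have hFval : ∑' k : ℤ, F k
      = (∑' (m : ℤ), a m * Real.cos ((m : ℝ) * q)) * Real.sin (q * (j : ℝ)) := by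
    have h1 : ∑' k : ℤ, F k = ∑' m : ℤ, F (j - m) :=
      ((Equiv.subLeft j).tsum_eq F).symm
    rw [h1]
    have h2 : (fun m : ℤ => F (j - m))
        = fun m : ℤ => (a m * Real.cos (q * (m : ℝ))) * Real.sin (q * (j : ℝ))
            - Real.cos (q * (j : ℝ)) * (a m * Real.sin (q * (m : ℝ))) := by
      funext m
      simp only [hFdef, sub_sub_cancel]
      push_cast
      rw [mul_sub, Real.sin_sub]
      ring
    rw [h2, Summable.tsum_sub (hcos.mul_right _) ((hsin.mul_left _))]
    rw [tsum_mul_right, tsum_mul_left, hodd, mul_zero, sub_zero]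
    congr 1
    apply tsum_congr
    intro m
    rw [mul_comm q]
  -- decompose into positive and negative parts
  have hpos : Summable fun n : ℕ => F ((n : ℤ) + 1) :=
    hFsum.comp_injective (fun x y h => by omega)
  have hneg : Summable fun n : ℕ => F (-((n : ℤ) + 1)) :=
    hFsum.comp_injective (fun x y h => by omega)
  have hdecomp : ∑' k : ℤ, F k = (∑' n : ℕ, F ((n : ℤ) + 1)) + F 0
      + ∑' n : ℕ, F (-((n : ℤ) + 1)) := tsum_of_add_one_of_neg_add_one hpos hneg
  have hF0 : F 0 = 0 := by simp [hFdef]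
  -- transfer the subtype sum to ℕ
  let e : ℕ ≃ {n : ℤ // 1 ≤ n} :=
    { toFun := fun n => ⟨(n : ℤ) + 1, by omega⟩
      invFun := fun k => (k.1 - 1).toNat
      left_inv := fun n => by simp
      right_inv := fun k => by
        ext
        have := k.2
        simp
        omega }
  have hsubt : ∑' (k : {n : ℤ // 1 ≤ n}),
      (a (j - (k : ℤ)) - a (j + (k : ℤ))) * Real.sin (q * ((k : ℤ) : ℝ))
      = ∑' n : ℕ, (F ((n : ℤ) + 1) + F (-((n : ℤ) + 1))) := by
    rw [← e.tsum_eq]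
    apply tsum_congr
    intro n
    show (a (j - ((n:ℤ)+1)) - a (j + ((n:ℤ)+1))) * Real.sin (q * (((n:ℤ)+1 : ℤ) : ℝ))
      = F ((n : ℤ) + 1) + F (-((n : ℤ) + 1))
    simp only [hFdef]
    push_cast
    rw [mul_neg, Real.sin_neg, sub_neg_eq_add]
    ring
  rw [hsubt, Summable.tsum_add hpos hneg, ← hFval, hdecomp, hF0]
  ring
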